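/- Let R > 0, let 𝕀⁻¹ be a 3×3 real matrix with operator norm ‖𝕀⁻¹‖, let χ ∈ ℝ³, Δt > 0, w̄ ∈ ℝ, and Π ∈ ℝ³ with ‖Π‖ = R. Define F : ℝ³ × ℝ³ → ℝ³ × ℝ³ by F(A,B) := ( Π − (Δt/2)ξ×A + (Δt²/4)(ξ·A)ξ , Π − Δt(ξ×A + (1/2)ξ×B) + (Δt²/4)(ξ·B)ξ ), where ξ := (1/2)𝕀⁻¹((A+B)/2) + (1/2)χ·(w̄/Δt). If ‖𝕀⁻¹‖·R·Δt + ‖χ‖·|w̄| ≤ 1/4, then F maps the product of closed balls {‖A‖ ≤ 2R} × {‖B‖ ≤ 2R} into itself. -/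

import Mathlib

open Matrix
noncomputable section
/-- The Euclidean norm on `ℝ³ = Fin 3 → ℝ`. -/
def e3norm (v : Fin 3 → ℝ) : ℝ := Real.sqrt (v ⬝ᵥ v)
/-- The operator norm of a 3×3 real matrix with respect to the Euclidean norm. -/
def eOpNorm (M : Matrix (Fin 3) (Fin 3) ℝ) : ℝ :=
  ‖Matrix.toEuclideanCLM (𝕜 := ℝ) M‖

lemma e3norm_eq (v : Fin 3 → ℝ) :
    e3norm v = ‖(WithLp.equiv 2 (Fin 3 → ℝ)).symm v‖ := by
  rw [EuclideanSpace.norm_eq]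
  unfold e3norm dotProduct
  congr 1
  refine Finset.sum_congr rfl fun i _ => ?_
  simp [Real.norm_eq_abs, sq_abs, sq]

lemma e3norm_nonneg (v : Fin 3 → ℝ) : 0 ≤ e3norm v := Real.sqrt_nonneg _

lemma e3norm_add_le (a b : Fin 3 → ℝ) : e3norm (a + b) ≤ e3norm a + e3norm b := by
  simp only [e3norm_eq]
  show ‖WithLp.toLp 2 a + WithLp.toLp 2 b‖ ≤ _
  exact norm_add_le _ _

lemma e3norm_sub_le (a b : Fin 3 → ℝ) : e3norm (a - b) ≤ e3norm a + e3norm b := by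
  simp only [e3norm_eq]
  show ‖WithLp.toLp 2 a - WithLp.toLp 2 b‖ ≤ _
  exact norm_sub_le _ _

lemma e3norm_smul (c : ℝ) (v : Fin 3 → ℝ) : e3norm (c • v) = |c| * e3norm v := by
  simp only [e3norm_eq]
  show ‖c • WithLp.toLp 2 v‖ = |c| * ‖WithLp.toLp 2 v‖
  rw [norm_smul, Real.norm_eq_abs]

lemma e3norm_mulVec_le (M : Matrix (Fin 3) (Fin 3) ℝ) (v : Fin 3 → ℝ) :
    e3norm (M.mulVec v) ≤ eOpNorm M * e3norm v := by
  simp only [e3norm_eq]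
  show ‖Matrix.toEuclideanCLM (𝕜 := ℝ) M (WithLp.toLp 2 v)‖ ≤ eOpNorm M * ‖WithLp.toLp 2 v‖
  exact (Matrix.toEuclideanCLM (𝕜 := ℝ) M).le_opNorm _

lemma dot_self_nonneg (v : Fin 3 → ℝ) : 0 ≤ v ⬝ᵥ v :=
  Finset.sum_nonneg fun i _ => mul_self_nonneg _

lemma sq_e3norm (v : Fin 3 → ℝ) : e3norm v ^ 2 = v ⬝ᵥ v :=
  Real.sq_sqrt (dot_self_nonneg v)

lemma abs_dot_le (a b : Fin 3 → ℝ) : |a ⬝ᵥ b| ≤ e3norm a * e3norm b := by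
  have h : (a ⬝ᵥ b) ^ 2 ≤ (a ⬝ᵥ a) * (b ⬝ᵥ b) := by
    simp only [dotProduct, Fin.sum_univ_three]
    nlinarith [sq_nonneg (a 0 * b 1 - a 1 * b 0), sq_nonneg (a 0 * b 2 - a 2 * b 0),
      sq_nonneg (a 1 * b 2 - a 2 * b 1)]
  calc |a ⬝ᵥ b| = Real.sqrt ((a ⬝ᵥ b) ^ 2) := (Real.sqrt_sq_eq_abs _).symm
    _ ≤ Real.sqrt ((a ⬝ᵥ a) * (b ⬝ᵥ b)) := Real.sqrt_le_sqrt h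
    _ = e3norm a * e3norm b := by
        rw [Real.sqrt_mul (dot_self_nonneg a)]; rfl

lemma e3norm_cross_le (a b : Fin 3 → ℝ) : e3norm (a ⨯₃ b) ≤ e3norm a * e3norm b := by
  have h : (a ⨯₃ b) ⬝ᵥ (a ⨯₃ b) ≤ (a ⬝ᵥ a) * (b ⬝ᵥ b) := by
    simp only [crossProduct, dotProduct, Fin.sum_univ_three, LinearMap.mk₂_apply,
      Matrix.cons_val_zero, Matrix.cons_val_one, Matrix.head_cons, Matrix.cons_val_two,
      Matrix.tail_cons]
    nlinarith [sq_nonneg (a 0 * b 0 + a 1 * b 1 + a 2 * b 2)]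
  calc e3norm (a ⨯₃ b) = Real.sqrt ((a ⨯₃ b) ⬝ᵥ (a ⨯₃ b)) := rfl
    _ ≤ Real.sqrt ((a ⬝ᵥ a) * (b ⬝ᵥ b)) := Real.sqrt_le_sqrt h
    _ = e3norm a * e3norm b := by
        rw [Real.sqrt_mul (dot_self_nonneg a)]; rfl

/-- The self-map `F` of the implicit one-step equations of the stochastic variational
midpoint integrator for the free rigid body with previous momentum `Π`, stochastic
Hamiltonian `h₁(Π) = χ·Π` and truncated Wiener increment `w̄` maps the product of closed
balls of radius `2R` into itself, provided `‖𝕀⁻¹‖·R·Δt + ‖χ‖·|w̄| ≤ 1/4`. -/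
theorem midpoint_selfmap_maps_balls_into_balls
    (R : ℝ) (hR : 0 < R) (Iinv : Matrix (Fin 3) (Fin 3) ℝ) (χ : Fin 3 → ℝ)
    (Δt : ℝ) (hΔt : 0 < Δt) (wbar : ℝ) (Pv : Fin 3 → ℝ) (hPv : e3norm Pv = R)
    (F : (Fin 3 → ℝ) × (Fin 3 → ℝ) → (Fin 3 → ℝ) × (Fin 3 → ℝ))
    (hF : F = fun AB =>
      let ξ : Fin 3 → ℝ :=
        (1 / 2 : ℝ) • Iinv.mulVec ((1 / 2 : ℝ) • (AB.1 + AB.2)) +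
          (1 / 2 * (wbar / Δt)) • χ
      (Pv - (Δt / 2) • (ξ ⨯₃ AB.1) + (Δt ^ 2 / 4 * (ξ ⬝ᵥ AB.1)) • ξ,
       Pv - Δt • (ξ ⨯₃ AB.1 + (1 / 2 : ℝ) • (ξ ⨯₃ AB.2)) + (Δt ^ 2 / 4 * (ξ ⬝ᵥ AB.2)) • ξ))
    (hsmall : eOpNorm Iinv * R * Δt + e3norm χ * |wbar| ≤ 1 / 4) :
    ∀ AB : (Fin 3 → ℝ) × (Fin 3 → ℝ),
      e3norm AB.1 ≤ 2 * R → e3norm AB.2 ≤ 2 * R →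
      e3norm (F AB).1 ≤ 2 * R ∧ e3norm (F AB).2 ≤ 2 * R := by
  subst hF
  rintro ⟨A, B⟩ hA hB
  simp only at hA hB
  dsimp only
  set ξ : Fin 3 → ℝ :=
    (1 / 2 : ℝ) • Iinv.mulVec ((1 / 2 : ℝ) • (A + B)) + (1 / 2 * (wbar / Δt)) • χ with hξdef
  have hs0 : 0 ≤ e3norm ξ := e3norm_nonneg _
  have hA0 : 0 ≤ e3norm A := e3norm_nonneg _
  have hB0 : 0 ≤ e3norm B := e3norm_nonneg _
  have hM0 : 0 ≤ eOpNorm Iinv := norm_nonneg _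
  have hχ0 : 0 ≤ e3norm χ := e3norm_nonneg _
  -- bound on Δt * ‖ξ‖
  have hξb : e3norm ξ ≤ eOpNorm Iinv * R + e3norm χ * |wbar| / (2 * Δt) := by
    have h1 : e3norm ξ ≤ e3norm ((1 / 2 : ℝ) • Iinv.mulVec ((1 / 2 : ℝ) • (A + B)))
        + e3norm ((1 / 2 * (wbar / Δt)) • χ) := by rw [hξdef]; exact e3norm_add_le _ _
    have h2 : e3norm ((1 / 2 : ℝ) • Iinv.mulVec ((1 / 2 : ℝ) • (A + B)))
        ≤ eOpNorm Iinv * R := by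
      rw [e3norm_smul]
      have h3 : e3norm (Iinv.mulVec ((1 / 2 : ℝ) • (A + B)))
          ≤ eOpNorm Iinv * e3norm ((1 / 2 : ℝ) • (A + B)) := e3norm_mulVec_le _ _
      have h4 : e3norm ((1 / 2 : ℝ) • (A + B)) ≤ 2 * R := by
        rw [e3norm_smul]
        have := e3norm_add_le A B
        rw [abs_of_nonneg (by norm_num : (0:ℝ) ≤ 1/2)]
        nlinarith
      rw [abs_of_nonneg (by norm_num : (0:ℝ) ≤ 1/2)]
      nlinarith
    have h5 : e3norm ((1 / 2 * (wbar / Δt)) • χ) = e3norm χ * |wbar| / (2 * Δt) := by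
      rw [e3norm_smul]
      have habs : |1 / 2 * (wbar / Δt)| = |wbar| / (2 * Δt) := by
        rw [show (1:ℝ) / 2 * (wbar / Δt) = wbar / (2 * Δt) by ring,
          abs_div, abs_of_pos (by positivity : (0:ℝ) < 2 * Δt)]
      rw [habs]; ring
    rw [h5] at h1
    linarith
  clear_value ξ
  clear hξdef
  have ht : Δt * e3norm ξ ≤ 1 / 4 := by
    have h6 : Δt * e3norm ξ ≤ Δt * (eOpNorm Iinv * R + e3norm χ * |wbar| / (2 * Δt)) :=
      mul_le_mul_of_nonneg_left hξb hΔt.le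
    have h7 : Δt * (eOpNorm Iinv * R + e3norm χ * |wbar| / (2 * Δt))
        = eOpNorm Iinv * R * Δt + e3norm χ * |wbar| / 2 := by
      field_simp
    have h8 : 0 ≤ e3norm χ * |wbar| := mul_nonneg hχ0 (abs_nonneg _)
    rw [h7] at h6
    linarith
  have htA : Δt * e3norm ξ * e3norm A ≤ 1 / 4 * (2 * R) :=
    mul_le_mul ht hA hA0 (by norm_num)
  have htB : Δt * e3norm ξ * e3norm B ≤ 1 / 4 * (2 * R) :=
    mul_le_mul ht hB hB0 (by norm_num)
  have htsA : Δt * e3norm ξ * (Δt * e3norm ξ * e3norm A) ≤ 1 / 4 * (1 / 4 * (2 * R)) :=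
    mul_le_mul ht htA (mul_nonneg (mul_nonneg hΔt.le hs0) hA0) (by norm_num)
  have htsB : Δt * e3norm ξ * (Δt * e3norm ξ * e3norm B) ≤ 1 / 4 * (1 / 4 * (2 * R)) :=
    mul_le_mul ht htB (mul_nonneg (mul_nonneg hΔt.le hs0) hB0) (by norm_num)
  constructor
  · -- first component
    have hb1 : e3norm (Pv - (Δt / 2) • (ξ ⨯₃ A) + (Δt ^ 2 / 4 * (ξ ⬝ᵥ A)) • ξ)
        ≤ e3norm Pv + e3norm ((Δt / 2) • (ξ ⨯₃ A)) + e3norm ((Δt ^ 2 / 4 * (ξ ⬝ᵥ A)) • ξ) := by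
      calc _ ≤ e3norm (Pv - (Δt / 2) • (ξ ⨯₃ A)) + e3norm ((Δt ^ 2 / 4 * (ξ ⬝ᵥ A)) • ξ) :=
            e3norm_add_le _ _
        _ ≤ _ := by linarith [e3norm_sub_le Pv ((Δt / 2) • (ξ ⨯₃ A))]
    have hc1 : e3norm ((Δt / 2) • (ξ ⨯₃ A)) ≤ Δt / 2 * (e3norm ξ * e3norm A) := by
      rw [e3norm_smul, abs_of_pos (by positivity : (0:ℝ) < Δt / 2)]
      exact mul_le_mul_of_nonneg_left (e3norm_cross_le _ _) (by positivity)
    have hc2 : e3norm ((Δt ^ 2 / 4 * (ξ ⬝ᵥ A)) • ξ)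
        ≤ Δt ^ 2 / 4 * (e3norm ξ * e3norm A) * e3norm ξ := by
      rw [e3norm_smul, abs_mul, abs_of_pos (by positivity : (0:ℝ) < Δt ^ 2 / 4)]
      exact mul_le_mul_of_nonneg_right
        (mul_le_mul_of_nonneg_left (abs_dot_le ξ A) (by positivity)) hs0
    rw [hPv] at hb1
    linarith [hb1, hc1, hc2, htA, htsA]
  · -- second component
    have hb1 : e3norm (Pv - Δt • (ξ ⨯₃ A + (1 / 2 : ℝ) • (ξ ⨯₃ B)) + (Δt ^ 2 / 4 * (ξ ⬝ᵥ B)) • ξ)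
        ≤ e3norm Pv + e3norm (Δt • (ξ ⨯₃ A + (1 / 2 : ℝ) • (ξ ⨯₃ B)))
          + e3norm ((Δt ^ 2 / 4 * (ξ ⬝ᵥ B)) • ξ) := by
      calc _ ≤ e3norm (Pv - Δt • (ξ ⨯₃ A + (1 / 2 : ℝ) • (ξ ⨯₃ B)))
            + e3norm ((Δt ^ 2 / 4 * (ξ ⬝ᵥ B)) • ξ) := e3norm_add_le _ _
        _ ≤ _ := by linarith [e3norm_sub_le Pv (Δt • (ξ ⨯₃ A + (1 / 2 : ℝ) • (ξ ⨯₃ B)))]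
    have hc1 : e3norm (Δt • (ξ ⨯₃ A + (1 / 2 : ℝ) • (ξ ⨯₃ B)))
        ≤ Δt * (e3norm ξ * e3norm A + 1 / 2 * (e3norm ξ * e3norm B)) := by
      rw [e3norm_smul, abs_of_pos hΔt]
      have h9 : e3norm (ξ ⨯₃ A + (1 / 2 : ℝ) • (ξ ⨯₃ B))
          ≤ e3norm ξ * e3norm A + 1 / 2 * (e3norm ξ * e3norm B) := by
        have h12 := e3norm_add_le (ξ ⨯₃ A) ((1 / 2 : ℝ) • (ξ ⨯₃ B))
        have h10 := e3norm_cross_le ξ A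
        have h11 : e3norm ((1 / 2 : ℝ) • (ξ ⨯₃ B)) ≤ 1 / 2 * (e3norm ξ * e3norm B) := by
          rw [e3norm_smul, abs_of_nonneg (by norm_num : (0:ℝ) ≤ 1/2)]
          linarith [e3norm_cross_le ξ B]
        linarith
      exact mul_le_mul_of_nonneg_left h9 hΔt.le
    have hc2 : e3norm ((Δt ^ 2 / 4 * (ξ ⬝ᵥ B)) • ξ)
        ≤ Δt ^ 2 / 4 * (e3norm ξ * e3norm B) * e3norm ξ := by
      rw [e3norm_smul, abs_mul, abs_of_pos (by positivity : (0:ℝ) < Δt ^ 2 / 4)]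
      exact mul_le_mul_of_nonneg_right
        (mul_le_mul_of_nonneg_left (abs_dot_le ξ B) (by positivity)) hs0
    rw [hPv] at hb1
    linarith [hb1, hc1, hc2, htA, htB, htsB]
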